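/- Let R be a commutative ring, k ≥ 2, and n ≥ 1. Let F : ℕ⁺ → R and write f = F ∗ μ, so f(d) = ∑_{e ∣ d} F(e) μ(d/e). Then the k-dimensional GCD hyperdeterminant over indices {1,…,n} satisfies ∑_{(σ₂,…,σ_k) ∈ (S_n)^{k-1}} sign(σ₂)⋯sign(σ_k) · ∏_{i=1}^n F(gcd(i, σ₂(i), …, σ_k(i))) = ∏_{i=1}^n f(i). -/

import Mathlib

/-- The gcd `gcd(a, v 0, v 1, …)` of a positive integer `a` with a tuple `v` of positive
integers. -/
def gcdAll {p : ℕ} (a : ℕ) (v : Fin p → ℕ) : ℕ :=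
  (List.ofFn v).foldr Nat.gcd a

open Finset

namespace HyperdetAux

lemma dvd_foldr_gcd (e a : ℕ) (l : List ℕ) :
    e ∣ l.foldr Nat.gcd a ↔ e ∣ a ∧ ∀ x ∈ l, e ∣ x := by
  induction l with
  | nil => simp
  | cons x xs ih =>
    simp only [List.foldr_cons, Nat.dvd_gcd_iff, ih, List.mem_cons]
    constructor
    · rintro ⟨hx, ha, hl⟩
      exact ⟨ha, fun y hy => hy.elim (fun h => h ▸ hx) (hl y)⟩
    · rintro ⟨ha, hl⟩
      exact ⟨hl x (Or.inl rfl), ha, fun y hy => hl y (Or.inr hy)⟩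

lemma dvd_gcdAll {p : ℕ} (e a : ℕ) (v : Fin p → ℕ) :
    e ∣ gcdAll a v ↔ e ∣ a ∧ ∀ j, e ∣ v j := by
  rw [gcdAll, dvd_foldr_gcd]
  constructor
  · rintro ⟨ha, hl⟩
    exact ⟨ha, fun j => hl _ (List.mem_ofFn.2 ⟨j, rfl⟩ : v j ∈ List.ofFn v)⟩
  · rintro ⟨ha, hl⟩
    refine ⟨ha, fun x hx => ?_⟩
    obtain ⟨j, rfl⟩ := (List.mem_ofFn.1 hx : ∃ i, v i = x)
    exact hl j

lemma gcdAll_dvd_left {p : ℕ} (a : ℕ) (v : Fin p → ℕ) : gcdAll a v ∣ a :=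
  ((dvd_gcdAll _ _ _).1 dvd_rfl).1

variable {R : Type*} [CommRing R]

/-- `f = F ∗ μ`. -/
def mconv (F : ℕ → R) (d : ℕ) : R :=
  ∑ e ∈ d.divisors, F e * ((ArithmeticFunction.moebius (d / e) : ℤ) : R)

lemma sum_divisors_mconv (F : ℕ → R) {m : ℕ} (hm : m ≠ 0) :
    ∑ d ∈ m.divisors, mconv F d = F m := by
  classical
  set G : ArithmeticFunction R := ⟨fun k => if k = 0 then 0 else F k, if_pos rfl⟩ with hG
  have h1 : ∀ d : ℕ, d ≠ 0 →
      mconv F d = (G * ((ArithmeticFunction.moebius : ArithmeticFunction ℤ) :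
        ArithmeticFunction R)) d := by
    intro d hd
    rw [ArithmeticFunction.mul_apply,
      Nat.sum_divisorsAntidiagonal (f := fun a b => G a *
        ((ArithmeticFunction.moebius : ArithmeticFunction ℤ) : ArithmeticFunction R) b)]
    refine Finset.sum_congr rfl fun e he => ?_
    have he0 : e ≠ 0 := (Nat.pos_of_mem_divisors he).ne'
    simp only [hG, ArithmeticFunction.coe_mk, if_neg he0, ArithmeticFunction.intCoe_apply]
  have h2 : ∑ d ∈ m.divisors, mconv F d =
      ((G * ((ArithmeticFunction.moebius : ArithmeticFunction ℤ) : ArithmeticFunction R)) *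
        (ArithmeticFunction.zeta : ArithmeticFunction ℕ)) m := by
    rw [ArithmeticFunction.coe_mul_zeta_apply]
    exact Finset.sum_congr rfl fun d hd => h1 d (Nat.pos_of_mem_divisors hd).ne'
  rw [h2, mul_assoc, ArithmeticFunction.coe_moebius_mul_coe_zeta, mul_one]
  simp [hG, hm]

lemma sum_divisors_eq_fin {n m : ℕ} (hm : m ≠ 0) (hmn : m ≤ n) (g : ℕ → R) :
    ∑ d ∈ m.divisors, g d =
      ∑ e : Fin n, if ((e : ℕ) + 1) ∣ m then g ((e : ℕ) + 1) else 0 := by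
  classical
  have himg : m.divisors =
      ((Finset.range n).filter (fun d => (d + 1) ∣ m)).image (fun d => d + 1) := by
    ext x
    simp only [Nat.mem_divisors, Finset.mem_image, Finset.mem_filter, Finset.mem_range]
    constructor
    · rintro ⟨hx, -⟩
      have hx1 : 1 ≤ x := Nat.one_le_iff_ne_zero.2 (by
        rintro rfl; exact hm (Nat.eq_zero_of_zero_dvd hx))
      have hx2 : x ≤ m := Nat.le_of_dvd (Nat.pos_of_ne_zero hm) hx
      exact ⟨x - 1, ⟨by omega, by rwa [Nat.sub_add_cancel hx1]⟩, Nat.sub_add_cancel hx1⟩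
    · rintro ⟨d, ⟨-, hd⟩, rfl⟩
      exact ⟨hd, hm⟩
  rw [himg, Finset.sum_image (by intro a _ b _ h; simp only at h; omega), Finset.sum_filter,
    ← Fin.sum_univ_eq_sum_range (fun d => if (d + 1) ∣ m then g (d + 1) else 0) n]

lemma inj_le_eq_id {n : ℕ} (τ : Fin n → Fin n) (hinj : Function.Injective τ)
    (hle : ∀ i, τ i ≤ i) : ∀ i, τ i = i := by
  have key : ∀ m : ℕ, ∀ i : Fin n, (i : ℕ) = m → τ i = i := by
    intro m
    induction m using Nat.strong_induction_on with
    | _ m ih =>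
      intro i hi
      rcases lt_or_eq_of_le (hle i) with h | h
      · exfalso
        have hlt : ((τ i : ℕ)) < m := hi ▸ h
        have h2 : τ (τ i) = τ i := ih _ hlt (τ i) rfl
        exact absurd (hinj h2) (ne_of_lt h)
      · exact h
  exact fun i => key (i : ℕ) i rfl

end HyperdetAux

open HyperdetAux

/-- let `R` be a commutative ring, `k = p + 2 ≥ 2`, `n ≥ 1`, `F : ℕ⁺ → R` and
`f = F ∗ μ`, i.e. `f(d) = ∑_{e ∣ d} F(e) μ(d/e)`.  The `k`-dimensional GCD hyperdeterminant
over `{1,…,n}` satisfies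
`∑_{(σ₂,…,σ_k) ∈ (S_n)^{k-1}} sign(σ₂)⋯sign(σ_k) ∏ᵢ F(gcd(i, σ₂(i), …, σ_k(i))) = ∏ᵢ f(i)`. -/
theorem hyperdet_gcd_factor_closed {R : Type*} [CommRing R] {n p : ℕ} (hn : 1 ≤ n)
    (F : ℕ → R) :
    ∑ σ : Fin (p + 1) → Equiv.Perm (Fin n),
        ((∏ j, (Equiv.Perm.sign (σ j) : ℤ)) : ℤ) *
          ∏ i : Fin n, F (gcdAll ((i : ℕ) + 1) (fun j => ((σ j i : ℕ) + 1))) =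
      ∏ i : Fin n,
        ∑ e ∈ ((i : ℕ) + 1).divisors,
          F e * ((ArithmeticFunction.moebius (((i : ℕ) + 1) / e) : ℤ) : R) := by
  classical
  have hRHS : (∏ i : Fin n,
      ∑ e ∈ ((i : ℕ) + 1).divisors,
        F e * ((ArithmeticFunction.moebius (((i : ℕ) + 1) / e) : ℤ) : R)) =
      ∏ i : Fin n, mconv F ((i : ℕ) + 1) := rfl
  rw [hRHS]
  set A : Fin n → Fin n → R :=
    fun i e => if ((e : ℕ) + 1) ∣ ((i : ℕ) + 1) then mconv F ((e : ℕ) + 1) else 0 with hA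
  set Z : Matrix (Fin n) (Fin n) R :=
    Matrix.of (fun a e => if ((e : ℕ) + 1) ∣ ((a : ℕ) + 1) then (1 : R) else 0) with hZ
  -- pointwise rewrite of F(gcd)
  have key : ∀ (σ : Fin (p + 1) → Equiv.Perm (Fin n)) (i : Fin n),
      F (gcdAll ((i : ℕ) + 1) (fun j => ((σ j i : ℕ) + 1))) =
        ∑ e : Fin n, A i e * ∏ j, Z (σ j i) e := by
    intro σ i
    set m := gcdAll ((i : ℕ) + 1) (fun j => ((σ j i : ℕ) + 1)) with hmdef
    have hdvd : m ∣ (i : ℕ) + 1 := gcdAll_dvd_left _ _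
    have hm0 : m ≠ 0 := by
      intro h
      have h2 := Nat.eq_zero_of_zero_dvd (h ▸ hdvd)
      omega
    have h1 : F m = ∑ d ∈ m.divisors, mconv F d := (sum_divisors_mconv F hm0).symm
    have h2 : m.divisors = (((i : ℕ) + 1).divisors).filter (· ∣ m) :=
      (Nat.divisors_filter_dvd_of_dvd (by omega) hdvd).symm
    rw [h1, h2, Finset.sum_filter,
      sum_divisors_eq_fin (n := n) (by omega) (by omega)
        (fun d => if d ∣ m then mconv F d else 0)]
    refine Finset.sum_congr rfl fun e _ => ?_
    have hZe : (∏ j, Z (σ j i) e) =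
        if ∀ j, ((e : ℕ) + 1) ∣ ((σ j i : ℕ) + 1) then (1 : R) else 0 := by
      simp only [hZ, Matrix.of_apply]
      rw [Fintype.prod_boole]
      congr
    rw [hZe]
    have hdm : ((e : ℕ) + 1) ∣ m ↔
        ((e : ℕ) + 1) ∣ ((i : ℕ) + 1) ∧ ∀ j, ((e : ℕ) + 1) ∣ ((σ j i : ℕ) + 1) :=
      dvd_gcdAll _ _ _
    by_cases hi : ((e : ℕ) + 1) ∣ ((i : ℕ) + 1)
    · by_cases hj : ∀ j, ((e : ℕ) + 1) ∣ ((σ j i : ℕ) + 1)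
      · have hem : ((e : ℕ) + 1) ∣ m := hdm.2 ⟨hi, hj⟩
        simp [hA, hi, hj, hem]
      · have hnm : ¬ ((e : ℕ) + 1) ∣ m := fun h => hj (hdm.1 h).2
        simp [hA, hi, hj, hnm]
    · simp [hA, hi]
  calc
    ∑ σ : Fin (p + 1) → Equiv.Perm (Fin n),
        ((∏ j, (Equiv.Perm.sign (σ j) : ℤ)) : ℤ) *
          ∏ i : Fin n, F (gcdAll ((i : ℕ) + 1) (fun j => ((σ j i : ℕ) + 1)))
      = ∑ σ : Fin (p + 1) → Equiv.Perm (Fin n),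
          (∏ j, ((Equiv.Perm.sign (σ j) : ℤ) : R)) *
            ∑ τ : Fin n → Fin n, ∏ i, (A i (τ i) * ∏ j, Z (σ j i) (τ i)) := by
        refine Finset.sum_congr rfl fun σ _ => ?_
        push_cast
        rw [← Fintype.prod_sum (fun i e => A i e * ∏ j, Z (σ j i) e)]
        congr 1
        exact Finset.prod_congr rfl fun i _ => key σ i
    _ = ∑ τ : Fin n → Fin n, (∏ i, A i (τ i)) *
          (∑ π : Equiv.Perm (Fin n),
            ((Equiv.Perm.sign π : ℤ) : R) * ∏ i, Z (π i) (τ i)) ^ (p + 1) := by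
        simp only [Finset.mul_sum]
        rw [Finset.sum_comm]
        refine Finset.sum_congr rfl fun τ _ => ?_
        rw [Fintype.sum_pow (fun π : Equiv.Perm (Fin n) =>
          ((Equiv.Perm.sign π : ℤ) : R) * ∏ i, Z (π i) (τ i)) (p + 1), Finset.mul_sum]
        refine Finset.sum_congr rfl fun σ _ => ?_
        rw [Finset.prod_mul_distrib, Finset.prod_mul_distrib, Finset.prod_comm]
        ring
    _ = ∏ i : Fin n, mconv F ((i : ℕ) + 1) := by
        have hdetZ : Z.det = 1 := by
          have htri : Z.BlockTriangular OrderDual.toDual := by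
            intro a e h
            have h2 : (a : ℕ) < (e : ℕ) := h
            simp only [hZ, Matrix.of_apply]
            rw [if_neg]
            intro hdvd
            have := Nat.le_of_dvd (by omega) hdvd
            omega
          rw [Matrix.det_of_lowerTriangular Z htri]
          refine Finset.prod_eq_one fun i _ => ?_
          simp [hZ]
        have detEq : ∀ τ : Fin n → Fin n,
            (∑ π : Equiv.Perm (Fin n),
              ((Equiv.Perm.sign π : ℤ) : R) * ∏ i, Z (π i) (τ i)) =
            (Z.submatrix id τ).det := by
          intro τ
          rw [Matrix.det_apply']
          rfl
        rw [Finset.sum_eq_single (fun i : Fin n => i)]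
        · have hAi : ∀ i : Fin n, A i i = mconv F ((i : ℕ) + 1) := fun i => if_pos dvd_rfl
          have hd : (∑ π : Equiv.Perm (Fin n),
              ((Equiv.Perm.sign π : ℤ) : R) * ∏ i, Z (π i) i) = 1 := by
            rw [detEq (fun i => i)]
            have : Z.submatrix id (fun i => i) = Z := rfl
            rw [this, hdetZ]
          simp only [hd, one_pow, mul_one]
          exact Finset.prod_congr rfl fun i _ => hAi i
        · intro τ _ hτ
          by_cases hdvd : ∀ i : Fin n, ((τ i : ℕ) + 1) ∣ ((i : ℕ) + 1)
          · have hle : ∀ i, τ i ≤ i := by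
              intro i
              have := Nat.le_of_dvd (by omega) (hdvd i)
              exact Fin.le_def.2 (by omega)
            have hninj : ¬ Function.Injective τ := by
              intro hinj
              exact hτ (funext (inj_le_eq_id τ hinj hle))
            rw [Function.not_injective_iff] at hninj
            obtain ⟨x, y, hxy, hne⟩ := hninj
            have hdet0 : (∑ π : Equiv.Perm (Fin n),
                ((Equiv.Perm.sign π : ℤ) : R) * ∏ i, Z (π i) (τ i)) = 0 := by
              rw [detEq τ]
              exact Matrix.det_zero_of_column_eq hne (fun k => by
                simp [Matrix.submatrix_apply, hxy])
            rw [hdet0, zero_pow (Nat.succ_ne_zero p), mul_zero]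
          · push_neg at hdvd
            obtain ⟨i, hi⟩ := hdvd
            have hA0 : A i (τ i) = 0 := if_neg hi
            rw [Finset.prod_eq_zero (Finset.mem_univ i) hA0, zero_mul]
        · intro h
          exact absurd (Finset.mem_univ _) h
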